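/- Let d : {1,…,n} × {1,…,n} → ℝ be a semi-metric (d(u,w) ≥ 0, d(u,u) = 0, d(u,w) = d(w,u)). For θ ∈ ℝ define the bivariate distribution p_θ(u,w) = exp(θ·d(u,w)) / ∑_{u₁=1}^n ∑_{u₂=1}^n exp(θ·d(u₁,u₂)), its marginals p_{U,θ}(u) = ∑_w p_θ(u,w) and p_{W,θ}(w) = ∑_u p_θ(u,w), and the covariance q_θ(u,w) = p_θ(u,w) − p_{U,θ}(u)·p_{W,θ}(w). Then for each fixed pair (u,w), the function θ ↦ q_θ(u,w) satisfies q_0(u,w) = 0 and has derivative at θ = 0 equal to −γ(u,w)/n², where γ(u,w) = (1/n)∑_{u₂} d(u₂,w) + (1/n)∑_{u₁} d(u,u₁) − (1/n²)∑_{u₂}∑_{u₁} d(u₂,u₁) − d(u,w) is the semi-cohesion measure induced by d. In particular, for small negative θ the covariance q_θ(u,w) is, to first order in θ, a positive multiple of γ(u,w). -/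

import Mathlib

open Finset

/-- For a semi-metric `d` on `{1,…,n}`, the exponentially sampled bivariate
distribution `p_θ(u,w) = exp(θ d(u,w)) / ∑_{u₁,u₂} exp(θ d(u₁,u₂))` with covariance
`q_θ(u,w) = p_θ(u,w) − p_{U,θ}(u) p_{W,θ}(w)` satisfies `q_0(u,w) = 0` and
`(d/dθ) q_θ(u,w) |_{θ=0} = −γ(u,w)/n²`, where `γ` is the semi-cohesion measure induced
by `d`. -/
theorem gme_exponential_sampling_derivative {n : ℕ}
    (d : Fin n → Fin n → ℝ)
    (hnonneg : ∀ u w, 0 ≤ d u w)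
    (hnull : ∀ u, d u u = 0)
    (hsymm : ∀ u w, d u w = d w u)
    (p : ℝ → Fin n → Fin n → ℝ)
    (hp : ∀ θ u w, p θ u w =
      Real.exp (θ * d u w) / ∑ u₁ : Fin n, ∑ u₂ : Fin n, Real.exp (θ * d u₁ u₂))
    (q : ℝ → Fin n → Fin n → ℝ)
    (hq : ∀ θ u w, q θ u w =
      p θ u w - (∑ w' : Fin n, p θ u w') * (∑ u' : Fin n, p θ u' w))
    (γ : Fin n → Fin n → ℝ)
    (hγ : ∀ u w, γ u w =
      (1 / (n : ℝ)) * ∑ u₂ : Fin n, d u₂ w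
      + (1 / (n : ℝ)) * ∑ u₁ : Fin n, d u u₁
      - (1 / (n : ℝ)) ^ 2 * ∑ u₂ : Fin n, ∑ u₁ : Fin n, d u₂ u₁
      - d u w) :
    ∀ u w : Fin n,
      q 0 u w = 0 ∧ HasDerivAt (fun θ => q θ u w) (-(γ u w) / (n : ℝ) ^ 2) 0 := by
  intro u w
  have hn : (0 : ℕ) < n := Fin.pos u
  have hnR : (0 : ℝ) < (n : ℝ) := by exact_mod_cast hn
  have hnne : (n : ℝ) ≠ 0 := ne_of_gt hnR
  set S : ℝ → ℝ := fun θ => ∑ u₁ : Fin n, ∑ u₂ : Fin n, Real.exp (θ * d u₁ u₂) with hS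
  have hS0 : S 0 = (n : ℝ) * n := by
    simp [hS, Finset.sum_const, Finset.card_univ]
  have hSne : S 0 ≠ 0 := by rw [hS0]; positivity
  set A : ℝ → ℝ := fun θ => ∑ w' : Fin n, Real.exp (θ * d u w') with hA
  set B : ℝ → ℝ := fun θ => ∑ u' : Fin n, Real.exp (θ * d u' w) with hB
  have hA0 : A 0 = n := by simp [hA, Finset.sum_const, Finset.card_univ]
  have hB0 : B 0 = n := by simp [hB, Finset.sum_const, Finset.card_univ]
  -- rewrite q
  have hqf : (fun θ => q θ u w) =
      fun θ => Real.exp (θ * d u w) / S θ - (A θ / S θ) * (B θ / S θ) := by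
    funext θ
    rw [hq, hp]
    simp only [hp]
    rw [← Finset.sum_div, ← Finset.sum_div]
  -- derivative of exp(θ * c) at 0 is c
  have hexp : ∀ a b : Fin n, HasDerivAt (fun θ : ℝ => Real.exp (θ * d a b)) (d a b) 0 := by
    intro a b
    have h1 : HasDerivAt (fun θ : ℝ => θ * d a b) (d a b) 0 := by
      simpa using (hasDerivAt_id (0:ℝ)).mul_const (d a b)
    have := h1.exp
    simpa using this
  have hSd : HasDerivAt S (∑ u₁ : Fin n, ∑ u₂ : Fin n, d u₁ u₂) 0 :=
    HasDerivAt.fun_sum fun u₁ _ => HasDerivAt.fun_sum fun u₂ _ => hexp u₁ u₂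
  have hAd : HasDerivAt A (∑ w' : Fin n, d u w') 0 :=
    HasDerivAt.fun_sum fun w' _ => hexp u w'
  have hBd : HasDerivAt B (∑ u' : Fin n, d u' w) 0 :=
    HasDerivAt.fun_sum fun u' _ => hexp u' w
  have hEd : HasDerivAt (fun θ : ℝ => Real.exp (θ * d u w)) (d u w) 0 := hexp u w
  constructor
  · rw [hq, hp]
    have h1 : (∑ w' : Fin n, p 0 u w') = A 0 / S 0 := by
      simp only [hp]; rw [← Finset.sum_div]
    have h2 : (∑ u' : Fin n, p 0 u' w) = B 0 / S 0 := by
      simp only [hp]; rw [← Finset.sum_div]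
    rw [h1, h2, hA0, hB0, hS0]
    simp only [zero_mul, Real.exp_zero, Finset.sum_const, Finset.card_univ, Fintype.card_fin, nsmul_eq_mul, mul_one]
    field_simp
    ring
  · rw [hqf]
    have hder := (hEd.div hSd hSne).sub ((hAd.div hSd hSne).mul (hBd.div hSd hSne))
    refine hder.congr_deriv ?_
    simp only [Pi.div_apply]
    rw [hγ, hS0, hA0, hB0]
    simp only [Real.exp_zero, zero_mul, one_mul, mul_one]
    field_simp
    ring
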